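/- (Integrality of reduced traces and norms on orders) Let a, b be nonzero rationals, A = ℍ[ℚ, a, b], and O an order of A. Then for every α ∈ O, the reduced trace tr(α) = α + star α and the reduced norm nr(α) = normSq α are integers (i.e. the scalar tr(α) ∈ ℚ lies in ℤ and nr(α) ∈ ℚ lies in ℤ). -/

import Mathlib

open scoped Quaternion

/-- An order in the quaternion algebra `ℍ[ℚ, a, b]`: a subring (hence containing `1`)
which is finitely generated as a ℤ-module and contains a ℚ-basis of the algebra
(i.e. spans it over ℚ). -/
def IsOrder {a b : ℚ} (O : Subring ℍ[ℚ, a, b]) : Prop :=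
  (∃ s : Finset ℍ[ℚ, a, b],
      (Submodule.span ℤ (s : Set ℍ[ℚ, a, b]) : Set ℍ[ℚ, a, b]) = (O : Set ℍ[ℚ, a, b])) ∧
    Submodule.span ℚ (O : Set ℍ[ℚ, a, b]) = ⊤

/-- The reduced trace `tr(α)`, the scalar with `α + star α = tr(α)·1`. -/
def redTrace {a b : ℚ} (α : ℍ[ℚ, a, b]) : ℚ := 2 * α.re

/-- The reduced norm `nr(α)`, the scalar with `α * star α = nr(α)·1`. -/
def redNorm {a b : ℚ} (α : ℍ[ℚ, a, b]) : ℚ := (α * star α).re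

/-- **Integrality of reduced traces and norms on orders.** For every element `α` of an
order `O` of `A = ℍ[ℚ, a, b]`, the reduced trace `tr(α) = α + star α` and the reduced
norm `nr(α) = normSq α` are (rational) integers. -/
theorem redTrace_redNorm_isInteger (a b : ℚ) (ha : a ≠ 0) (hb : b ≠ 0)
    (O : Subring ℍ[ℚ, a, b]) (hO : IsOrder O) (α : ℍ[ℚ, a, b]) (hα : α ∈ O) :
    (∃ m : ℤ, redTrace α = (m : ℚ)) ∧ ∃ n : ℤ, redNorm α = (n : ℚ) := by
  classical
  -- the order as a ℤ-subalgebra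
  let S : Subalgebra ℤ ℍ[ℚ, a, b] :=
    { toSubsemiring := O.toSubsemiring
      algebraMap_mem' := fun n => by
        simpa using (intCast_mem O n : ((n : ℤ) : ℍ[ℚ, a, b]) ∈ O) }
  obtain ⟨⟨s, hs⟩, -⟩ := hO
  have hfg : S.toSubmodule.FG := by
    refine ⟨s, ?_⟩
    apply Submodule.ext
    intro x
    constructor
    · intro hx
      have : x ∈ (O : Set ℍ[ℚ, a, b]) := hs ▸ hx
      exact this
    · intro hx
      have : x ∈ (Submodule.span ℤ (s : Set ℍ[ℚ, a, b]) : Set ℍ[ℚ, a, b]) := hs ▸ hx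
      exact this
  -- α is integral over ℤ
  have hint : IsIntegral ℤ α := IsIntegral.of_mem_of_fg S hfg α hα
  -- star α is integral over ℤ
  have hstarint : IsIntegral ℤ (star α) := by
    obtain ⟨p, hp, hp0⟩ := hint
    refine ⟨p, hp, ?_⟩
    rw [← Polynomial.aeval_def] at hp0 ⊢
    have : (Polynomial.aeval (star α)) p = star ((Polynomial.aeval α) p) := by
      rw [Polynomial.aeval_eq_sum_range (p := p) (star α),
        Polynomial.aeval_eq_sum_range (p := p) α, star_sum]
      refine Finset.sum_congr rfl fun i _ => ?_
      rw [star_zsmul, star_pow]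
    rw [this, hp0, star_zero]
  -- work in the commutative subalgebra ℚ[α]
  let B : Subalgebra ℚ ℍ[ℚ, a, b] := Algebra.adjoin ℚ ({α} : Set ℍ[ℚ, a, b])
  letI : CommRing B := Algebra.adjoinCommRingOfComm ℚ
    (by rintro x rfl y rfl; rfl)
  have hαB : α ∈ B := Algebra.self_mem_adjoin_singleton ℚ α
  have hstar_eq : star α = algebraMap ℚ ℍ[ℚ, a, b] (2 * α.re) - α := by
    ext <;> simp [QuaternionAlgebra.algebraMap_eq] <;> ring
  have hstarB : star α ∈ B := by
    rw [hstar_eq]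
    exact sub_mem (B.algebraMap_mem _) hαB
  let f : B →ₐ[ℤ] ℍ[ℚ, a, b] := (B.val.toRingHom).toIntAlgHom
  have hf : Function.Injective f := Subtype.val_injective
  have hx : IsIntegral ℤ (⟨α, hαB⟩ : B) := (isIntegral_algHom_iff f hf).mp hint
  have hy : IsIntegral ℤ (⟨star α, hstarB⟩ : B) := (isIntegral_algHom_iff f hf).mp hstarint
  have htr_eq : α + star α = algebraMap ℚ ℍ[ℚ, a, b] (redTrace α) := by
    ext <;> simp [redTrace, QuaternionAlgebra.algebraMap_eq] <;> ring
  have hnr_eq : α * star α = algebraMap ℚ ℍ[ℚ, a, b] (redNorm α) := by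
    ext <;>
      simp [redNorm, QuaternionAlgebra.algebraMap_eq, QuaternionAlgebra.re_mul,
        QuaternionAlgebra.imI_mul, QuaternionAlgebra.imJ_mul, QuaternionAlgebra.imK_mul] <;>
      ring
  have hcoe : Function.Injective (algebraMap ℚ ℍ[ℚ, a, b]) := by
    rw [QuaternionAlgebra.coe_algebraMap]
    exact QuaternionAlgebra.coe_injective
  have key : ∀ t : ℚ, IsIntegral ℤ (algebraMap ℚ ℍ[ℚ, a, b] t) → ∃ m : ℤ, t = (m : ℚ) := by
    intro t ht
    have : IsIntegral ℤ t :=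
      (isIntegral_algHom_iff ((algebraMap ℚ ℍ[ℚ, a, b]).toIntAlgHom) hcoe).mp ht
    obtain ⟨m, hm⟩ := IsIntegrallyClosed.isIntegral_iff.mp this
    exact ⟨m, by simpa using hm.symm⟩
  constructor
  · refine key _ ?_
    rw [← htr_eq]
    have h1 : IsIntegral ℤ ((⟨α, hαB⟩ : B) + ⟨star α, hstarB⟩) := hx.add hy
    have h2 := (isIntegral_algHom_iff f hf).mpr h1
    exact h2
  · refine key _ ?_
    rw [← hnr_eq]
    have h1 : IsIntegral ℤ ((⟨α, hαB⟩ : B) * ⟨star α, hstarB⟩) := hx.mul hy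
    have h2 := (isIntegral_algHom_iff f hf).mpr h1
    exact h2
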